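/- Let f : {0,1}^n → {0,1} be balanced and U_1,…,U_m unitaries yielding m mutually unbiased bases of C^{2^n}. With ρ_y = (1/(2^{n−1} m)) Σ_b Σ_{x ∈ f^{−1}(y)} U_b|x⟩⟨x|U_b†, the Helstrom success probability satisfies ½(1 + ½‖ρ₀ − ρ₁‖₁) ≤ ½ + 1/(2√m). -/

import Mathlib

open Matrix
open scoped ComplexOrder

/-- The square root of a positive semidefinite matrix, as in the older Mathlib
(`Matrix.PosSemidef.sqrt`, removed since): `U diag(√λ) Uᴴ`. -/
noncomputable def Matrix.PosSemidef.sqrt {n : Type*} [Fintype n] [DecidableEq n]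
    {𝕜 : Type*} [RCLike 𝕜] {A : Matrix n n 𝕜} (hA : A.PosSemidef) : Matrix n n 𝕜 :=
  hA.1.eigenvectorUnitary.1 * diagonal ((↑) ∘ Real.sqrt ∘ hA.1.eigenvalues) *
    (star hA.1.eigenvectorUnitary : Matrix n n 𝕜)

/-- The trace norm `‖A‖₁ = Tr √(AᴴA)`. -/
noncomputable def traceNorm {ι : Type*} [Fintype ι] [DecidableEq ι]
    (A : Matrix ι ι ℂ) : ℝ :=
  ((Matrix.posSemidef_conjTranspose_mul_self A).sqrt.trace).re

/-- The average state `ρ_y = (1/(2^{n-1} m)) Σ_b Σ_{x ∈ f⁻¹(y)} U_b |x⟩⟨x| U_b†`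
for a Boolean function `f` encoded in `m` bases. -/
noncomputable def rhoAvg (n m : ℕ)
    (U : Fin m → Matrix (Fin n → Bool) (Fin n → Bool) ℂ)
    (f : (Fin n → Bool) → Bool) (y : Bool) :
    Matrix (Fin n → Bool) (Fin n → Bool) ℂ :=
  ((2 ^ (n - 1) * m : ℂ))⁻¹ •
    ∑ b, ∑ x ∈ Finset.univ.filter (fun x => f x = y),
      U b * Matrix.single x x 1 * (U b)ᴴ

lemma traceNorm_hermitian {ι : Type*} [Fintype ι] [DecidableEq ι] {A : Matrix ι ι ℂ}
    (hA : A.IsHermitian) : traceNorm A = ∑ i, |hA.eigenvalues i| := by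
  set V : Matrix ι ι ℂ := (hA.eigenvectorUnitary : Matrix ι ι ℂ) with hVdef
  have hV1 : star V * V = 1 := Matrix.mem_unitaryGroup_iff'.mp hA.eigenvectorUnitary.2
  have hV2 : V * star V = 1 := Matrix.mem_unitaryGroup_iff.mp hA.eigenvectorUnitary.2
  set B : Matrix ι ι ℂ := V * diagonal (fun i => (Complex.ofReal |hA.eigenvalues i|)) * star V with hBdef
  have hdiag : Matrix.PosSemidef (diagonal (fun i => (Complex.ofReal |hA.eigenvalues i|))) := by
    refine posSemidef_diagonal_iff.mpr fun i => ?_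
    exact_mod_cast Complex.zero_le_real.mpr (abs_nonneg _)
  have hBpsd : B.PosSemidef := by
    have := hdiag.mul_mul_conjTranspose_same V
    rwa [← Matrix.star_eq_conjTranspose] at this
  have hB2 : B ^ 2 = Aᴴ * A := by
    rw [hA.eq, pow_two, hBdef]
    conv_rhs => rw [hA.spectral_theorem]
    rw [show ∀ (X Y : Matrix ι ι ℂ), (V * X * star V) * (V * Y * star V) = V * (X * (star V * V) * Y) * star V by intros; noncomm_ring]
    simp only [Unitary.conjStarAlgAut_apply, Unitary.coe_star]
    rw [show ∀ (X Y : Matrix ι ι ℂ), (V * X * star V) * (V * Y * star V) = V * (X * (star V * V) * Y) * star V by intros; noncomm_ring]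
    have hdd : diagonal (fun i => Complex.ofReal |hA.eigenvalues i|) *
        diagonal (fun i => Complex.ofReal |hA.eigenvalues i|) =
        diagonal ((RCLike.ofReal : ℝ → ℂ) ∘ hA.eigenvalues) *
        diagonal ((RCLike.ofReal : ℝ → ℂ) ∘ hA.eigenvalues) := by
      rw [diagonal_mul_diagonal, diagonal_mul_diagonal]
      ext i j
      by_cases h : i = j
      · subst h
        simp only [Matrix.diagonal_apply_eq, Function.comp_apply]
        rw [← Complex.ofReal_mul, abs_mul_abs_self, Complex.ofReal_mul]
        exact rfl
      · rw [Matrix.diagonal_apply_ne _ h, Matrix.diagonal_apply_ne _ h]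
    rw [hV1, mul_one, mul_one, hdd]
  have hsqrt : B = (Matrix.posSemidef_conjTranspose_mul_self A).sqrt :=
    by
      have hP := Matrix.posSemidef_conjTranspose_mul_self A
      calc B = cfc (Real.sqrt ∘ (fun x : ℝ => x ^ 2)) A := by
            rw [hA.cfc_eq, IsHermitian.cfc, Unitary.conjStarAlgAut_apply, hBdef]
            congr 3
            funext i
            simp [Real.sqrt_sq_eq_abs]
        _ = cfc Real.sqrt (cfc (fun x : ℝ => x ^ 2) A) := cfc_comp _ _ A hA.isSelfAdjoint
        _ = cfc Real.sqrt (Aᴴ * A) := by rw [cfc_pow_id A 2 hA.isSelfAdjoint, hA.eq, sq]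
        _ = _ := by
            rw [hP.1.cfc_eq, IsHermitian.cfc, Unitary.conjStarAlgAut_apply]
            rfl
  rw [traceNorm, ← hsqrt, hBdef, Matrix.trace_mul_cycle, hV1, one_mul,
    Matrix.trace_diagonal]
  push_cast
  simp

lemma trace_sq_hermitian {ι : Type*} [Fintype ι] [DecidableEq ι] {A : Matrix ι ι ℂ}
    (hA : A.IsHermitian) : (Aᴴ * A).trace = ((∑ i, hA.eigenvalues i ^ 2 : ℝ) : ℂ) := by
  set V : Matrix ι ι ℂ := (hA.eigenvectorUnitary : Matrix ι ι ℂ) with hVdef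
  have hV1 : star V * V = 1 := Matrix.mem_unitaryGroup_iff'.mp hA.eigenvectorUnitary.2
  rw [hA.eq]
  conv_lhs => rw [hA.spectral_theorem]
  simp only [Unitary.conjStarAlgAut_apply, Unitary.coe_star]
  rw [show ∀ (X Y : Matrix ι ι ℂ), (V * X * star V) * (V * Y * star V) = V * (X * (star V * V) * Y) * star V by intros; noncomm_ring]
  rw [hV1, mul_one, diagonal_mul_diagonal, Matrix.trace_mul_cycle, hV1, one_mul,
    Matrix.trace_diagonal]
  push_cast
  simp [Function.comp_apply, sq]

/-- For a balanced Boolean function `f` on `n`-bit strings encoded in `m`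
mutually unbiased bases, the Helstrom success probability satisfies
`½(1 + ½‖ρ₀ − ρ₁‖₁) ≤ ½ + 1/(2√m)`. -/
theorem helstrom_le_balanced_mubs
    {n m : ℕ} (hn : 1 ≤ n) (hm : 1 ≤ m)
    (f : (Fin n → Bool) → Bool)
    (hf : ∀ y, (Finset.univ.filter (fun x => f x = y)).card = 2 ^ (n - 1))
    (U : Fin m → Matrix (Fin n → Bool) (Fin n → Bool) ℂ)
    (hU : ∀ b, (U b)ᴴ * U b = 1 ∧ U b * (U b)ᴴ = 1)
    (hmub : ∀ b b', b ≠ b' → ∀ x x',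
      ‖((U b)ᴴ * U b') x x'‖ ^ 2 = ((2 : ℝ) ^ n)⁻¹) :
    (1/2 : ℝ) * (1 + (1/2) * traceNorm (rhoAvg n m U f false - rhoAvg n m U f true))
      ≤ 1/2 + 1/(2 * Real.sqrt m) := by
  set c : ℂ := ((2 ^ (n - 1) * m : ℂ))⁻¹ with hc
  set d : (Fin n → Bool) → ℂ := fun x => if f x then (-1 : ℂ) else 1 with hd
  -- Step A
  have hS : ∀ y : Bool, (∑ x ∈ Finset.univ.filter (fun x => f x = y),
      Matrix.single x x (1 : ℂ)) = diagonal (fun i => if f i = y then 1 else 0) := by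
    intro y
    ext i j
    simp only [Matrix.sum_apply]
    by_cases h : i = j
    · subst h
      rw [Matrix.diagonal_apply_eq]
      have hx : ∀ x : (Fin n → Bool), Matrix.single x x (1:ℂ) i i
          = if x = i then 1 else 0 := by
        intro x
        simp [Matrix.single, Matrix.of_apply, and_self]
      simp only [hx]
      rw [Finset.sum_ite_eq' (Finset.univ.filter fun x => f x = y) i (fun _ => (1:ℂ))]
      simp [Finset.mem_filter]
    · rw [Matrix.diagonal_apply_ne _ h]
      refine Finset.sum_eq_zero fun x _ => ?_
      simp only [Matrix.single, Matrix.of_apply, ite_eq_right_iff, and_imp]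
      rintro rfl rfl
      exact absurd rfl h
  have key : rhoAvg n m U f false - rhoAvg n m U f true
      = c • ∑ b, U b * diagonal d * (U b)ᴴ := by
    unfold rhoAvg
    rw [← smul_sub, ← Finset.sum_sub_distrib]
    congr 1
    refine Finset.sum_congr rfl fun b _ => ?_
    have pull : ∀ (s : Finset (Fin n → Bool)), (∑ x ∈ s, U b * Matrix.single x x (1:ℂ) * (U b)ᴴ)
        = U b * (∑ x ∈ s, Matrix.single x x (1:ℂ)) * (U b)ᴴ := by
      intro s
      rw [Finset.mul_sum, Finset.sum_mul]
    rw [pull, pull, hS, hS, ← sub_mul, ← mul_sub]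
    have hdd : (diagonal fun i => if f i = false then (1:ℂ) else 0)
        - (diagonal fun i => if f i = true then (1:ℂ) else 0) = diagonal d := by
      ext i j
      by_cases h : i = j
      · subst h
        simp only [Matrix.sub_apply, Matrix.diagonal_apply_eq, hd]
        cases hfi : f i <;> simp [hfi]
      · simp [Matrix.diagonal_apply_ne _ h]
    rw [hdd]
  -- sum of d is zero
  have hsum : (∑ x : (Fin n → Bool), d x) = 0 := by
    rw [hd]
    rw [Finset.sum_ite (f := fun _ => (-1:ℂ)) (g := fun _ => (1:ℂ))]
    simp only [Finset.sum_const, smul_eq_mul, mul_one, mul_neg_one]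
    have h1 : (Finset.univ.filter (fun x : (Fin n → Bool) => f x = true)).card = 2 ^ (n-1) := hf true
    have h0 : (Finset.univ.filter (fun x : (Fin n → Bool) => ¬ (f x = true))).card = 2 ^ (n-1) := by
      rw [← hf false]
      congr 1
      ext x
      simp [Bool.not_eq_true]
    rw [h1, h0]
    ring
  -- Hermitian
  have hdstar : star d = d := by
    funext x
    simp only [hd, Pi.star_apply]
    cases hfx : f x <;> simp
  have hdH : (diagonal d)ᴴ = diagonal d := by
    rw [diagonal_conjTranspose, hdstar]
  have hcstar : star c = c := by
    rw [hc]
    simp [star_inv₀, star_mul', starRingEnd_apply]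
  have hAH : (rhoAvg n m U f false - rhoAvg n m U f true).IsHermitian := by
    rw [key]
    show _ᴴ = _
    rw [Matrix.conjTranspose_smul, hcstar]
    congr 1
    rw [Matrix.conjTranspose_sum]
    refine Finset.sum_congr rfl fun b _ => ?_
    simp only [Matrix.conjTranspose_mul, Matrix.conjTranspose_conjTranspose, hdH, mul_assoc]
  -- per-pair traces
  have h1X : ∀ b (X : Matrix (Fin n → Bool) (Fin n → Bool) ℂ), (U b)ᴴ * (U b * X) = X :=
    fun b X => by rw [← mul_assoc, (hU b).1, one_mul]
  have hcard : (Fintype.card (Fin n → Bool)) = 2 ^ n := by simp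
  have hTr : ∀ b b', ((U b * diagonal d * (U b)ᴴ) * (U b' * diagonal d * (U b')ᴴ)).trace
      = if b = b' then ((2:ℂ) ^ n) else 0 := by
    intro b b'
    by_cases hbb : b = b'
    · subst hbb
      rw [if_pos rfl]
      simp only [mul_assoc]
      rw [h1X, Matrix.trace_mul_comm]
      simp only [mul_assoc]
      rw [(hU b).1, mul_one, diagonal_mul_diagonal, Matrix.trace_diagonal]
      have hd1 : ∀ i, d i * d i = 1 := fun i => by cases hfi : f i <;> simp [hd, hfi]
      simp only [hd1]
      rw [Finset.sum_const, Finset.card_univ, hcard]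
      push_cast
      ring
    · rw [if_neg hbb]
      set V := (U b)ᴴ * U b' with hV
      have e1 : (U b * diagonal d * (U b)ᴴ) * (U b' * diagonal d * (U b')ᴴ)
          = U b * (diagonal d * (V * (diagonal d * (U b')ᴴ))) := by
        simp only [hV, mul_assoc]
      rw [e1, Matrix.trace_mul_comm]
      have e2 : (diagonal d * (V * (diagonal d * (U b')ᴴ))) * U b
          = diagonal d * (V * (diagonal d * Vᴴ)) := by
        rw [hV, Matrix.conjTranspose_mul, Matrix.conjTranspose_conjTranspose]
        simp only [mul_assoc]
      rw [e2]
      have habs : ∀ i j, V i j * star (V i j) = ((2:ℂ) ^ n)⁻¹ := by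
        intro i j
        rw [show star (V i j) = (starRingEnd ℂ) (V i j) from rfl, Complex.mul_conj,
          Complex.normSq_eq_norm_sq, hmub b b' hbb i j]
        push_cast
        ring
      have e3 : (diagonal d * (V * (diagonal d * Vᴴ))).trace
          = ∑ i, ∑ j, d i * d j * ((2:ℂ)^n)⁻¹ := by
        rw [Matrix.trace]
        refine Finset.sum_congr rfl fun i _ => ?_
        simp only [Matrix.diag_apply, Matrix.mul_apply, Matrix.diagonal_apply,
          Matrix.conjTranspose_apply, ite_mul, zero_mul, mul_ite, mul_zero,
          Finset.sum_ite_eq, Finset.mem_univ, if_true]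
        rw [Finset.mul_sum]
        refine Finset.sum_congr rfl fun j _ => ?_
        rw [show d i * (V i j * (d j * star (V i j)))
          = d i * d j * (V i j * star (V i j)) by ring, habs i j]
      rw [e3]
      simp only [← Finset.sum_mul, ← Finset.mul_sum]
      rw [hsum]
      simp
  -- total trace
  have htr : ((rhoAvg n m U f false - rhoAvg n m U f true)ᴴ
      * (rhoAvg n m U f false - rhoAvg n m U f true)).trace = c * c * (m * (2:ℂ)^n) := by
    rw [hAH.eq, key, Matrix.smul_mul, Matrix.mul_smul, Matrix.trace_smul, Matrix.trace_smul]
    rw [Finset.sum_mul]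
    simp only [Finset.mul_sum]
    rw [Matrix.trace_sum]
    simp only [Matrix.trace_sum, hTr]
    simp only [Finset.sum_ite_eq, Finset.mem_univ, if_true]
    rw [Finset.sum_const, Finset.card_univ, Fintype.card_fin]
    simp [smul_eq_mul]
    ring
  -- real scalar
  set r : ℝ := ((2:ℝ) ^ (n - 1) * m)⁻¹ with hr
  have hm0 : (0:ℝ) < m := by exact_mod_cast hm
  have hcr : c = ((r : ℝ) : ℂ) := by
    rw [hc, hr]
    push_cast
    ring
  set A := rhoAvg n m U f false - rhoAvg n m U f true with hA
  have htr' : (Aᴴ * A).trace = ((r ^ 2 * (m * 2 ^ n) : ℝ) : ℂ) := by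
    rw [htr, hcr]
    push_cast
    ring
  have hsumsq : (∑ i, hAH.eigenvalues i ^ 2) = r ^ 2 * (m * 2 ^ n) := by
    have := trace_sq_hermitian hAH
    rw [htr'] at this
    exact_mod_cast this.symm
  have htn : traceNorm A = ∑ i, |hAH.eigenvalues i| := traceNorm_hermitian hAH
  have htn0 : 0 ≤ traceNorm A := by
    rw [htn]
    exact Finset.sum_nonneg fun i _ => abs_nonneg _
  have hCS : (traceNorm A) ^ 2 ≤ (2:ℝ) ^ n * (r ^ 2 * (m * 2 ^ n)) := by
    rw [htn]
    calc (∑ i, |hAH.eigenvalues i|) ^ 2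
        ≤ (Finset.univ.card : ℝ) * ∑ i, |hAH.eigenvalues i| ^ 2 :=
          sq_sum_le_card_mul_sum_sq
      _ = (2:ℝ) ^ n * (r ^ 2 * (m * 2 ^ n)) := by
          rw [Finset.card_univ, hcard]
          simp only [sq_abs]
          rw [hsumsq]
          push_cast
          ring
  have h2n1 : (2:ℝ) ^ n = 2 * 2 ^ (n - 1) := by
    rw [← pow_succ']
    congr 1
    omega
  have hval : (2:ℝ) ^ n * (r ^ 2 * (m * 2 ^ n)) = 4 / m := by
    rw [h2n1, hr]
    have h2 : ((2:ℝ) ^ (n - 1)) ≠ 0 := by positivity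
    field_simp
    ring
  have hsq : Real.sqrt (4 / m) = 2 / Real.sqrt m := by
    rw [show (4:ℝ) / m = (2 / Real.sqrt m) ^ 2 by
      rw [div_pow, Real.sq_sqrt hm0.le]
      norm_num]
    exact Real.sqrt_sq (by positivity)
  have htle : traceNorm A ≤ 2 / Real.sqrt m := by
    rw [← hsq]
    have h4 : (traceNorm A) ^ 2 ≤ 4 / m := by rw [← hval]; exact hCS
    calc traceNorm A = Real.sqrt ((traceNorm A) ^ 2) := (Real.sqrt_sq htn0).symm
      _ ≤ Real.sqrt (4 / m) := Real.sqrt_le_sqrt h4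
  have hsm : 0 < Real.sqrt m := Real.sqrt_pos.mpr hm0
  have hdiv : (2 / Real.sqrt m) / 4 = 1 / (2 * Real.sqrt m) := by
    field_simp
    ring
  nlinarith [htle, hsm]
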